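/- Let V be a finite-dimensional complex vector space with a nondegenerate symmetric bilinear form ⟨·,·⟩ and let φ be a skew-symmetric endomorphism of V. For an eigenvalue λ of φ, let L_λ = Ker((φ − λI)^n) (n = dim V) denote the generalized eigenspace. Then the orthogonal complement of L_λ with respect to the form equals the direct sum of all generalized eigenspaces L_μ with μ ≠ −λ. -/

import Mathlib

/-- Key pairing lemma: if `x` is killed by `(φ - a)^k`, `y` by `(φ - b)^l`, and
`a + b ≠ 0`, then `B x y = 0`. -/
lemma pairing_zero_of_skew
    (V : Type*) [AddCommGroup V] [Module ℂ V]
    (B : LinearMap.BilinForm ℂ V)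
    (φ : Module.End ℂ V) (hskew : ∀ x y, B (φ x) y + B x (φ y) = 0)
    (a b : ℂ) (hab : a + b ≠ 0) :
    ∀ (k l : ℕ) (x y : V), ((φ - a • 1) ^ k) x = 0 → ((φ - b • 1) ^ l) y = 0 →
      B x y = 0 := by
  suffices H : ∀ (n k l : ℕ), k + l = n → ∀ (x y : V), ((φ - a • 1) ^ k) x = 0 →
      ((φ - b • 1) ^ l) y = 0 → B x y = 0 by
    intro k l; exact H (k + l) k l rfl
  intro n
  induction n using Nat.strong_induction_on with
  | _ n ih =>
  intro k l hn x y hx hy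
  match k, l with
  | 0, _ =>
    simp only [pow_zero, Module.End.one_apply] at hx; simp [hx]
  | _, 0 =>
    simp only [pow_zero, Module.End.one_apply] at hy; simp [hy]
  | (k+1), (l+1) =>
    have hx' : ((φ - a • 1) ^ k) ((φ - a • 1) x) = 0 := by
      rw [← Module.End.mul_apply, ← pow_succ]; exact hx
    have hy' : ((φ - b • 1) ^ l) ((φ - b • 1) y) = 0 := by
      rw [← Module.End.mul_apply, ← pow_succ]; exact hy
    have h1 : B ((φ - a • 1) x) y = 0 :=
      ih (k + (l+1)) (by omega) k (l+1) rfl _ _ hx' hy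
    have h2 : B x ((φ - b • 1) y) = 0 :=
      ih ((k+1) + l) (by omega) (k+1) l rfl _ _ hx hy'
    have key : B ((φ - a • 1) x) y + B x ((φ - b • 1) y) = -((a + b) * B x y) := by
      have h := hskew x y
      simp only [LinearMap.sub_apply, LinearMap.smul_apply, Module.End.one_apply,
        map_sub, map_smul, smul_eq_mul, LinearMap.sub_apply]
      linear_combination h
    rw [h1, h2] at key
    have hmul : (a + b) * B x y = 0 := by linear_combination key
    exact (mul_eq_zero.mp hmul).resolve_left hab

/-- For a skew-symmetric endomorphism `φ` of a finite-dimensional complex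
vector space with a nondegenerate symmetric bilinear form, the orthogonal complement of
the generalized eigenspace `L_λ` equals the (direct) sum of all generalized eigenspaces
`L_μ` with `μ ≠ -λ`. -/
theorem orthogonal_genEigenspace_of_skew
    (V : Type*) [AddCommGroup V] [Module ℂ V] [FiniteDimensional ℂ V]
    (B : LinearMap.BilinForm ℂ V) (hBnd : B.Nondegenerate) (hBsymm : ∀ x y, B x y = B y x)
    (φ : Module.End ℂ V) (hskew : ∀ x y, B (φ x) y + B x (φ y) = 0)
    (L : ℂ → Submodule ℂ V)
    (hL : ∀ μ : ℂ, L μ = LinearMap.ker ((φ - μ • 1) ^ (Module.finrank ℂ V)))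
    (lam : ℂ) (hlam : Module.End.HasEigenvalue φ lam) :
    B.orthogonal (L lam) = ⨆ μ ∈ {μ : ℂ | μ ≠ -lam}, L μ := by
  classical
  set n := Module.finrank ℂ V
  -- pairing lemma specialized
  have pair : ∀ (a b : ℂ), a + b ≠ 0 → ∀ x ∈ L a, ∀ y ∈ L b, B x y = 0 := by
    intro a b hab x hx y hy
    rw [hL a, LinearMap.mem_ker] at hx
    rw [hL b, LinearMap.mem_ker] at hy
    exact pairing_zero_of_skew V B φ hskew a b hab n n x y hx hy
  have hLmax : ∀ μ, L μ = φ.maxGenEigenspace μ := by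
    intro μ
    rw [Module.End.maxGenEigenspace_eq_genEigenspace_finrank, Module.End.genEigenspace_nat, hL]
  -- ⊇ direction
  have hsup_le : (⨆ μ ∈ {μ : ℂ | μ ≠ -lam}, L μ) ≤ B.orthogonal (L lam) := by
    refine iSup₂_le fun μ hμ => ?_
    intro y hy x hx
    exact pair lam μ (fun h => hμ (by linear_combination h)) x hx y hy
  refine le_antisymm ?_ hsup_le
  -- ⊆ direction
  intro x hx
  have htop : (⨆ μ, L μ) = ⊤ := by
    simp_rw [hLmax]; exact Module.End.iSup_maxGenEigenspace_eq_top φ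
  have hx_mem : x ∈ L (-lam) ⊔ ⨆ μ ∈ {μ : ℂ | μ ≠ -lam}, L μ := by
    have hle : (⨆ μ, L μ) ≤ L (-lam) ⊔ ⨆ μ ∈ {μ : ℂ | μ ≠ -lam}, L μ := by
      refine iSup_le fun μ => ?_
      by_cases h : μ = -lam
      · exact h ▸ le_sup_left
      · exact le_trans (le_iSup₂ (f := fun μ _ => L μ) μ h) le_sup_right
    exact hle (htop ▸ Submodule.mem_top)
  obtain ⟨y, hy, z, hz, hxyz⟩ := Submodule.mem_sup.mp hx_mem
  -- z is in the orthogonal, hence y = x - z is too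
  have hz_orth : z ∈ B.orthogonal (L lam) := hsup_le hz
  have hy_orth : y ∈ B.orthogonal (L lam) := by
    have : y = x - z := by rw [← hxyz]; abel
    rw [this]; exact Submodule.sub_mem _ hx hz_orth
  -- y pairs to zero with everything
  have hy0 : y = 0 := by
    apply hBnd.1
    intro m
    rw [← hBsymm]
    have hm : m ∈ (⊤ : Submodule ℂ V) := trivial
    rw [← htop] at hm
    revert hm
    have : (⨆ μ, L μ) ≤ LinearMap.ker (B.flip y) := by
      refine iSup_le fun μ v hv => ?_
      simp only [LinearMap.mem_ker, LinearMap.flip_apply]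
      by_cases hμ : μ = lam
      · exact hy_orth v (hμ ▸ hv)
      · exact pair μ (-lam) (fun h => hμ (by linear_combination h)) v hv y hy
    intro hm
    exact this hm
  rw [← hxyz, hy0, zero_add]
  exact hz
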